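/- Let α > 0 and let X be a nonnegative random variable such that E[X^α · 1_{X ≤ r}] ≤ C₂ · log r for all r ≥ e. Then E[X^p] ≤ (C₂ + α e^α)/(α − p) for all p ∈ (0, α). -/

import Mathlib

open MeasureTheory Real
open Set Filter
open scoped ENNReal

lemma aux_int {δ : ℝ} (hδ : 0 < δ) :
    MeasureTheory.IntegrableOn (fun t : ℝ => t ^ (-1 - δ) * Real.log t) (Set.Ioi (Real.exp 1)) ∧
    ∫ t in Set.Ioi (Real.exp 1), t ^ (-1 - δ) * Real.log t
      = Real.exp (-δ) * (δ + 1) / δ ^ 2 := by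
  set G : ℝ → ℝ := fun t => -(t ^ (-δ) * Real.log t / δ) - t ^ (-δ) / δ ^ 2 with hG
  have hderiv : ∀ t ∈ Set.Ici (Real.exp 1), HasDerivAt G (t ^ (-1 - δ) * Real.log t) t := by
    intro t ht
    have ht0 : (0:ℝ) < t := lt_of_lt_of_le (Real.exp_pos 1) ht
    have h1 : HasDerivAt (fun s : ℝ => s ^ (-δ)) (-δ * t ^ (-δ - 1)) t := by
      simpa using Real.hasDerivAt_rpow_const (p := -δ) (Or.inl ht0.ne')
    have h2 : HasDerivAt Real.log t⁻¹ t := Real.hasDerivAt_log ht0.ne'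
    have h4 := ((h1.mul h2).div_const δ).neg.sub (h1.div_const (δ ^ 2))
    refine h4.congr_deriv ?_
    have hts : t ^ (-δ - 1) = t ^ (-δ) / t := by
      rw [show -δ - 1 = -δ - 1 from rfl, Real.rpow_sub ht0, Real.rpow_one]
    have hexp : (-1 - δ : ℝ) = -δ - 1 := by ring
    rw [hexp, hts]
    field_simp
    ring
  have hnn : ∀ t ∈ Set.Ioi (Real.exp 1), 0 ≤ t ^ (-1 - δ) * Real.log t := by
    intro t ht
    have ht1 : (1:ℝ) ≤ t := le_trans (by linarith [Real.add_one_le_exp 1]) (le_of_lt ht)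
    exact mul_nonneg (Real.rpow_nonneg (by linarith) _) (Real.log_nonneg ht1)
  have t1 : Tendsto (fun t : ℝ => t ^ (-δ) * Real.log t) atTop (nhds 0) := by
    have := (isLittleO_log_rpow_atTop hδ).tendsto_div_nhds_zero
    apply this.congr'
    filter_upwards [eventually_gt_atTop (0:ℝ)] with x hx
    rw [Real.rpow_neg hx.le]
    rw [div_eq_mul_inv, mul_comm]
  have t2 : Tendsto (fun t : ℝ => t ^ (-δ)) atTop (nhds 0) := tendsto_rpow_neg_atTop hδ
  have htend : Tendsto G atTop (nhds 0) := by
    have := ((t1.div_const δ).neg).sub (t2.div_const (δ ^ 2))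
    simpa using this
  have hGe : G (Real.exp 1) = -(Real.exp (-δ) / δ) - Real.exp (-δ) / δ ^ 2 := by
    simp [hG, Real.exp_one_rpow, Real.log_exp]
  refine ⟨integrableOn_Ioi_deriv_of_nonneg' hderiv hnn htend, ?_⟩
  rw [integral_Ioi_of_hasDerivAt_of_nonneg' hderiv hnn htend, hGe]
  field_simp
  ring

open MeasureTheory Real Set Filter
open scoped ENNReal

lemma aux_point {x p α : ℝ} (hx : 0 ≤ x) (hp0 : 0 < p) (hpα : p < α) :
    ENNReal.ofReal (x ^ p) ≤ ENNReal.ofReal (Real.exp α) +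
      ENNReal.ofReal (α - p) * ∫⁻ t in Set.Ioi (Real.exp 1),
        (if x ≤ t then ENNReal.ofReal (x ^ α * t ^ (p - α - 1)) else 0) := by
  rcases le_or_gt x (Real.exp 1) with h | h
  · refine le_trans (ENNReal.ofReal_le_ofReal ?_) le_self_add
    calc x ^ p ≤ Real.exp 1 ^ p := Real.rpow_le_rpow hx h hp0.le
    _ = Real.exp p := Real.exp_one_rpow p
    _ ≤ Real.exp α := Real.exp_le_exp.mpr hpα.le
  · have hx0 : (0:ℝ) < x := lt_trans (Real.exp_pos 1) h
    have hlt : p - α - 1 < -1 := by linarith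
    have hδ : (0:ℝ) < α - p := by linarith
    have key : ENNReal.ofReal (α - p) * (∫⁻ t in Set.Ioi (Real.exp 1),
        (if x ≤ t then ENNReal.ofReal (x ^ α * t ^ (p - α - 1)) else 0))
        = ENNReal.ofReal (x ^ p) := by
      have hfun : (fun t : ℝ => if x ≤ t then ENNReal.ofReal (x ^ α * t ^ (p - α - 1)) else 0)
          = fun t : ℝ => (Set.Ici x).indicator
              (fun t => ENNReal.ofReal (x ^ α) * ENNReal.ofReal (t ^ (p - α - 1))) t := by
        funext t
        by_cases ht : x ≤ t
        · rw [if_pos ht, Set.indicator_of_mem (Set.mem_Ici.mpr ht),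
            ENNReal.ofReal_mul (Real.rpow_nonneg hx0.le _)]
        · rw [if_neg ht, Set.indicator_of_notMem (by simpa using ht)]
      have hIoi : ∫⁻ t in Set.Ioi x, ENNReal.ofReal (t ^ (p - α - 1)) ∂volume
          = ENNReal.ofReal (x ^ (p - α) / (α - p)) := by
        rw [← ofReal_integral_eq_lintegral_ofReal (integrableOn_Ioi_rpow_of_lt hlt hx0)]
        · rw [integral_Ioi_rpow_of_lt hlt hx0]
          congr 1
          rw [show p - α - 1 + 1 = p - α by ring, show α - p = -(p - α) by ring, div_neg,
            neg_div]
        · filter_upwards [ae_restrict_mem measurableSet_Ioi] with t ht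
          exact Real.rpow_nonneg (le_trans hx0.le (le_of_lt ht)) _
      rw [hfun, lintegral_indicator measurableSet_Ici,
        Measure.restrict_restrict measurableSet_Ici,
        Set.inter_eq_left.mpr (Set.Ici_subset_Ioi.mpr h),
        setLIntegral_congr (Ioi_ae_eq_Ici (a := x)).symm,
        lintegral_const_mul' _ _ ENNReal.ofReal_ne_top, hIoi,
        ← ENNReal.ofReal_mul (Real.rpow_nonneg hx0.le α), ← ENNReal.ofReal_mul hδ.le]
      congr 1
      field_simp
      rw [← Real.rpow_add hx0, show α + (p - α) = p by ring]
    rw [← key]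
    exact le_add_self



/-- If E[X^α 1_{X ≤ r}] ≤ C₂ log r for all r ≥ e, then
E[X^p] ≤ (C₂ + α e^α)/(α−p) for all p ∈ (0,α). -/
theorem truncated_implies_moment_bound {Ω : Type*} [MeasurableSpace Ω] (μ : Measure Ω)
    [IsProbabilityMeasure μ]
    (X : Ω → ℝ) (hX : Measurable X) (hXnn : ∀ ω, 0 ≤ X ω) (α C₂ : ℝ) (hα : 0 < α) (hC₂ : 0 < C₂)
    (htrunc : ∀ r ≥ Real.exp 1,
      ∫⁻ ω in {ω | X ω ≤ r}, ENNReal.ofReal (X ω ^ α) ∂μ ≤ ENNReal.ofReal (C₂ * Real.log r)) :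
    ∀ p ∈ Set.Ioo 0 α,
      ∫⁻ ω, ENNReal.ofReal (X ω ^ p) ∂μ
        ≤ ENNReal.ofReal ((C₂ + α * Real.exp α) / (α - p)) := by
  intro p hp
  obtain ⟨hp0, hpα⟩ := hp
  have hδ : (0:ℝ) < α - p := by linarith
  set f : Ω → ℝ → ℝ≥0∞ := fun ω t =>
    if X ω ≤ t then ENNReal.ofReal (X ω ^ α * t ^ (p - α - 1)) else 0 with hf
  have hfm : Measurable (Function.uncurry f) := by
    apply Measurable.ite (measurableSet_le (hX.comp measurable_fst) measurable_snd)
    · exact (((hX.comp measurable_fst).pow_const α).mul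
        (measurable_snd.pow_const (p - α - 1))).ennreal_ofReal
    · exact measurable_const
  have hF : Measurable fun ω => ∫⁻ t in Set.Ioi (Real.exp 1), f ω t ∂volume :=
    hfm.lintegral_prod_right'
  -- pointwise bound
  have hpoint : ∀ ω, ENNReal.ofReal (X ω ^ p) ≤ ENNReal.ofReal (Real.exp α) +
      ENNReal.ofReal (α - p) * ∫⁻ t in Set.Ioi (Real.exp 1), f ω t ∂volume :=
    fun ω => aux_point (hXnn ω) hp0 hpα
  -- inner bound for fixed t
  have hinner : ∀ t ∈ Set.Ioi (Real.exp 1),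
      ∫⁻ ω, f ω t ∂μ ≤ ENNReal.ofReal (C₂ * (t ^ (p - α - 1) * Real.log t)) := by
    intro t ht
    have ht0 : (0:ℝ) < t := lt_trans (Real.exp_pos 1) ht
    have htc : (0:ℝ) ≤ t ^ (p - α - 1) := Real.rpow_nonneg ht0.le _
    have hfun : (fun ω => f ω t) = fun ω => ({ω | X ω ≤ t}).indicator
        (fun ω => ENNReal.ofReal (t ^ (p - α - 1)) * ENNReal.ofReal (X ω ^ α)) ω := by
      funext ω
      by_cases hω : X ω ≤ t
      · rw [hf]
        simp only [if_pos hω, Set.indicator_of_mem (show ω ∈ {ω | X ω ≤ t} from hω)]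
        rw [mul_comm (X ω ^ α), ENNReal.ofReal_mul htc]
      · rw [hf]
        simp only [if_neg hω, Set.indicator_of_notMem (show ω ∉ {ω | X ω ≤ t} from hω)]
    rw [hfun, lintegral_indicator (show MeasurableSet {ω | X ω ≤ t} from hX measurableSet_Iic),
      lintegral_const_mul' _ _ ENNReal.ofReal_ne_top]
    calc ENNReal.ofReal (t ^ (p - α - 1)) * ∫⁻ ω in {ω | X ω ≤ t}, ENNReal.ofReal (X ω ^ α) ∂μ
        ≤ ENNReal.ofReal (t ^ (p - α - 1)) * ENNReal.ofReal (C₂ * Real.log t) :=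
          mul_le_mul_right (htrunc t (le_of_lt ht)) _
      _ = ENNReal.ofReal (C₂ * (t ^ (p - α - 1) * Real.log t)) := by
          rw [← ENNReal.ofReal_mul htc]; congr 1; ring
  -- value of the outer integral bound
  have hval : ∫⁻ t in Set.Ioi (Real.exp 1),
      ENNReal.ofReal (C₂ * (t ^ (p - α - 1) * Real.log t)) ∂volume
      = ENNReal.ofReal (C₂ * (Real.exp (-(α - p)) * ((α - p) + 1) / (α - p) ^ 2)) := by
    have hc : p - α - 1 = -1 - (α - p) := by ring
    rw [← ofReal_integral_eq_lintegral_ofReal]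
    · rw [integral_const_mul]
      congr 1
      rw [show (fun t : ℝ => t ^ (p - α - 1) * Real.log t)
          = fun t : ℝ => t ^ (-1 - (α - p)) * Real.log t by funext t; rw [hc]]
      rw [(aux_int hδ).2]
    · simp_rw [hc]
      exact ((aux_int hδ).1.const_mul C₂)
    · filter_upwards [ae_restrict_mem measurableSet_Ioi] with t ht
      have ht1 : (1:ℝ) ≤ t := le_trans (by linarith [Real.add_one_le_exp 1]) (le_of_lt ht)
      exact mul_nonneg hC₂.le
        (mul_nonneg (Real.rpow_nonneg (by linarith) _) (Real.log_nonneg ht1))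
  calc ∫⁻ ω, ENNReal.ofReal (X ω ^ p) ∂μ
      ≤ ∫⁻ ω, (ENNReal.ofReal (Real.exp α) +
          ENNReal.ofReal (α - p) * ∫⁻ t in Set.Ioi (Real.exp 1), f ω t ∂volume) ∂μ :=
        lintegral_mono hpoint
    _ = ENNReal.ofReal (Real.exp α) + ENNReal.ofReal (α - p) *
          ∫⁻ ω, (∫⁻ t in Set.Ioi (Real.exp 1), f ω t ∂volume) ∂μ := by
        rw [lintegral_add_left measurable_const, lintegral_const,
          lintegral_const_mul' _ _ ENNReal.ofReal_ne_top, measure_univ, mul_one]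
    _ = ENNReal.ofReal (Real.exp α) + ENNReal.ofReal (α - p) *
          ∫⁻ t in Set.Ioi (Real.exp 1), (∫⁻ ω, f ω t ∂μ) ∂volume := by
        rw [lintegral_lintegral_swap hfm.aemeasurable]
    _ ≤ ENNReal.ofReal (Real.exp α) + ENNReal.ofReal (α - p) *
          ∫⁻ t in Set.Ioi (Real.exp 1),
            ENNReal.ofReal (C₂ * (t ^ (p - α - 1) * Real.log t)) ∂volume := by
        refine add_le_add_right (mul_le_mul_right ?_ _) _
        exact setLIntegral_mono
          ((((measurable_id'.pow_const _).mul Real.measurable_log).const_mul C₂).ennreal_ofReal)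
          hinner
    _ = ENNReal.ofReal (Real.exp α) + ENNReal.ofReal (α - p) *
          ENNReal.ofReal (C₂ * (Real.exp (-(α - p)) * ((α - p) + 1) / (α - p) ^ 2)) := by
        rw [hval]
    _ ≤ ENNReal.ofReal ((C₂ + α * Real.exp α) / (α - p)) := by
        rw [← ENNReal.ofReal_mul hδ.le, ← ENNReal.ofReal_add (Real.exp_pos α).le]
        · apply ENNReal.ofReal_le_ofReal
          rw [le_div_iff₀ hδ]
          have hE : Real.exp (-(α - p)) * ((α - p) + 1) ≤ 1 := by
            rw [Real.exp_neg]
            rw [inv_mul_le_iff₀ (Real.exp_pos _)]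
            simpa [mul_comm] using Real.add_one_le_exp (α - p)
          have h1 : C₂ * (Real.exp (-(α - p)) * ((α - p) + 1)) ≤ C₂ := by nlinarith
          have h2 : Real.exp α * (α - p) ≤ α * Real.exp α := by nlinarith [Real.exp_pos α]
          have hexpand : (Real.exp α + (α - p) *
              (C₂ * (Real.exp (-(α - p)) * ((α - p) + 1) / (α - p) ^ 2))) * (α - p)
              = Real.exp α * (α - p) + C₂ * (Real.exp (-(α - p)) * ((α - p) + 1)) := by
            field_simp
          rw [hexpand]
          linarith
        · positivity
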